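/- If a prime ideal 𝔭 of a commutative ring A is a pure ideal (i.e. A/𝔭 is a flat A-module), then 𝔭 is a minimal prime ideal of A. -/

import Mathlib

theorem pure_prime_is_minimal (A : Type*) [CommRing A] (p : Ideal A) (hp : p.IsPrime)
    (hpure : Module.Flat A (A ⧸ p)) : p ∈ minimalPrimes A := by
  -- key: for any f ∈ p, there is s ∉ p with f * s = 0
  have key : ∀ f ∈ p, ∃ s : A, s ∉ p ∧ f * s = 0 := by
    intro f hf
    have hrel : ∑ _ : PUnit.{1}, f • ((1 : A ⧸ p)) = 0 := by
      have : f • ((1 : A ⧸ p)) = 0 := by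
        show f • (Submodule.Quotient.mk (1 : A)) = 0
        rw [← Submodule.Quotient.mk_smul, smul_eq_mul, mul_one]
        exact (Submodule.Quotient.mk_eq_zero p).mpr hf
      simp [this]
    obtain ⟨κ, a, y, h1, h2⟩ :=
      Module.Flat.isTrivialRelation_of_sum_smul_eq_zero (f := fun _ : PUnit => f)
        (x := fun _ : PUnit => (1 : A ⧸ p)) hrel
    choose b hb using fun j => Ideal.Quotient.mk_surjective (y j)
    refine ⟨∑ j, a ⟨⟩ j * b j, ?_, ?_⟩
    · intro hs
      have : (Ideal.Quotient.mk p) (∑ j, a ⟨⟩ j * b j) = 1 := by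
        have := h1 ⟨⟩
        simp only [← hb] at this
        rw [map_sum]
        simpa [Ideal.Quotient.mk_eq_mk, map_mul, Algebra.smul_def, Ideal.Quotient.algebraMap_eq] using this.symm
      rw [Ideal.Quotient.eq_zero_iff_mem.mpr hs] at this
      exact one_ne_zero this.symm
    · have h2' := h2
      simp only [Finset.sum_const, Finset.card_univ, Fintype.card_punit] at h2'
      rw [Finset.mul_sum]
      calc ∑ j, f * (a ⟨⟩ j * b j) = ∑ j, (f * a ⟨⟩ j) * b j := by
            simp [mul_assoc]
        _ = 0 := by
            refine Finset.sum_eq_zero fun j _ => ?_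
            have := h2 j
            simpa using by rw [show f * a ⟨⟩ j = 0 by simpa using this, zero_mul]
  refine ⟨⟨hp, bot_le⟩, ?_⟩
  rintro q ⟨hq, -⟩ hqp f hf
  obtain ⟨s, hs, hfs⟩ := key f hf
  have : f * s ∈ q := by rw [hfs]; exact q.zero_mem
  rcases hq.mem_or_mem this with h | h
  · exact h
  · exact absurd (hqp h) hs
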